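/- Every wv-path along a finite union ⋃ᵢ₌₁ⁿ (Eᵢ × Fᵢ) of 'rectangle' relations of length ℓ > n contains a wv-path along the same relation of length at most n. -/

import Mathlib

private lemma take_append_drop_sublist {W : Type*} (l : List W) (a b : ℕ) (hab : a ≤ b) :
    List.Sublist (l.take a ++ l.drop b) l := by
  have h1 : l.take a = (l.take b).take a := by
    rw [List.take_take, min_eq_left hab]
  have h2 : List.Sublist (l.take a ++ l.drop b) (l.take b ++ l.drop b) := by
    rw [h1]; exact (List.take_sublist _ _).append (List.Sublist.refl _)
  rw [List.take_append_drop b l] at h2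
  exact h2

private lemma ps_aux {W : Type*} (n : ℕ) (E F : Fin n → Set W) :
    ∀ m : ℕ, ∀ l : List W, l.length ≤ m → l ≠ [] →
    l.Chain' (fun x y => ∃ i : Fin n, x ∈ E i ∧ y ∈ F i) →
    l.tail.Nodup → l.dropLast.Nodup →
    ∃ p : List W, p.Chain' (fun x y => ∃ i : Fin n, x ∈ E i ∧ y ∈ F i) ∧
      p.head? = l.head? ∧ p.getLast? = l.getLast? ∧
      p.tail.Nodup ∧ p.dropLast.Nodup ∧ p.length ≤ n + 1 := by
  intro m
  induction m with
  | zero =>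
    intro l hl hne
    exact absurd (List.length_eq_zero_iff.1 (Nat.le_zero.1 hl)) hne
  | succ m ih =>
    intro l hlen hne hchain htail hdrop
    by_cases hsmall : l.length ≤ n + 1
    · exact ⟨l, hchain, rfl, rfl, htail, hdrop, hsmall⟩
    push_neg at hsmall
    have hedge := List.isChain_iff_getElem.1 hchain
    have hf : ∀ k : Fin (l.length - 1), ∃ i : Fin n,
        l.get ⟨k, by omega⟩ ∈ E i ∧ l.get ⟨(k : ℕ) + 1, by omega⟩ ∈ F i :=
      fun k => hedge k (by have := k.2; omega)
    choose f hf1 hf2 using hf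
    have hcard : Fintype.card (Fin n) < Fintype.card (Fin (l.length - 1)) := by
      simp only [Fintype.card_fin]; omega
    obtain ⟨a, b, hne', hfab⟩ := Fintype.exists_ne_map_eq_of_card_lt f hcard
    suffices H : ∀ a b : Fin (l.length - 1), (a : ℕ) < (b : ℕ) → f a = f b →
        ∃ p : List W, p.Chain' (fun x y => ∃ i : Fin n, x ∈ E i ∧ y ∈ F i) ∧
          p.head? = l.head? ∧ p.getLast? = l.getLast? ∧
          p.tail.Nodup ∧ p.dropLast.Nodup ∧ p.length ≤ n + 1 by
      rcases lt_or_gt_of_ne (fun h : (a : ℕ) = b => hne' (Fin.ext h)) with h | h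
      · exact H a b h hfab
      · exact H b a h hfab.symm
    clear hne' hfab a b
    intro a b hab hfab
    have ha : (a : ℕ) < l.length - 1 := a.2
    have hb : (b : ℕ) < l.length - 1 := b.2
    set l' : List W := l.take ((a : ℕ) + 1) ++ l.drop ((b : ℕ) + 1) with hl'
    have hdropne : l.drop ((b : ℕ) + 1) ≠ [] := by
      apply List.ne_nil_of_length_pos
      rw [List.length_drop]; omega
    have htakene : l.take ((a : ℕ) + 1) ≠ [] := by
      apply List.ne_nil_of_length_pos
      rw [List.length_take]
      have : 0 < l.length := List.length_pos_iff.2 hne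
      omega
    have hlast' : (l.take ((a : ℕ) + 1)).getLast? = some (l.get ⟨a, by omega⟩) := by
      rw [List.getLast?_take]
      simp only [Nat.add_eq_zero, and_false, if_false, Nat.add_sub_cancel]
      rw [List.getElem?_eq_getElem (by omega)]
      simp [List.get_eq_getElem]
    have hhead' : (l.drop ((b : ℕ) + 1)).head? = some (l.get ⟨(b : ℕ) + 1, by omega⟩) := by
      rw [List.head?_drop, List.getElem?_eq_getElem (by omega)]
      simp [List.get_eq_getElem]
    -- chain for l'
    have hchain' : l'.Chain' (fun x y => ∃ i : Fin n, x ∈ E i ∧ y ∈ F i) := by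
      refine List.isChain_append.2 ⟨hchain.take _, hchain.drop _, ?_⟩
      intro x hx y hy
      rw [hlast'] at hx
      rw [hhead'] at hy
      simp only [Option.mem_def, Option.some.injEq] at hx hy
      subst hx; subst hy
      exact ⟨f a, hf1 a, hfab ▸ hf2 b⟩
    -- head?
    have hhead'' : l'.head? = l.head? := by
      rw [hl', List.head?_append, List.head?_take]
      obtain ⟨x, t, rfl⟩ := List.exists_cons_of_ne_nil hne
      simp
    -- getLast?
    have hlast'' : l'.getLast? = l.getLast? := by
      rw [hl', List.getLast?_append_of_ne_nil _ hdropne, List.getLast?_drop]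
      rw [if_neg (by omega)]
    -- tail
    have htaileq : l'.tail = l.tail.take (a : ℕ) ++ l.tail.drop (b : ℕ) := by
      rw [hl', List.tail_append, if_neg (by simp [htakene])]
      congr 1
      · rw [← List.drop_one, List.drop_take, Nat.add_sub_cancel, List.drop_one]
      · rw [← List.drop_one, List.drop_drop, Nat.add_comm]
    have htail' : l'.tail.Nodup := by
      rw [htaileq]
      exact (take_append_drop_sublist _ _ _ (le_of_lt hab)).nodup htail
    -- dropLast
    have hdlasteq : l'.dropLast =
        l.dropLast.take ((a : ℕ) + 1) ++ l.dropLast.drop ((b : ℕ) + 1) := by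
      rw [hl', List.dropLast_append]
      rw [if_neg (by simp [hdropne])]
      congr 1
      · rw [List.dropLast_eq_take, List.take_take, min_eq_left (by omega)]
      · rw [List.dropLast_eq_take, List.dropLast_eq_take, List.drop_take,
          List.length_drop]
        congr 1
        omega
    have hdrop' : l'.dropLast.Nodup := by
      rw [hdlasteq]
      exact (take_append_drop_sublist _ _ _ (by omega)).nodup hdrop
    -- length
    have hlen' : l'.length < l.length := by
      rw [hl', List.length_append, List.length_take, List.length_drop]
      omega
    have hne'' : l' ≠ [] := by
      intro h
      rw [h] at hhead''
      obtain ⟨x, t, rfl⟩ := List.exists_cons_of_ne_nil hne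
      simp at hhead''
    obtain ⟨p, h1, h2, h3, h4, h5, h6⟩ :=
      ih l' (by omega) hne'' hchain' htail' hdrop'
    exact ⟨p, h1, h2.trans hhead'', h3.trans hlast'', h4, h5, h6⟩

/-- Every `wv`-path along a finite union `⋃ i, E i × F i` of rectangle relations of
length `ℓ > n` contains a `wv`-path along the same relation of length at most `n`.
(A path is represented by its list of vertices; its length is the number of edges.) -/
theorem path_shortening {W : Type*} (n : ℕ) (E F : Fin n → Set W) (w v : W)
    (ℓ : ℕ) (l : List W)
    (hchain : l.Chain' (fun x y => ∃ i : Fin n, x ∈ E i ∧ y ∈ F i))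
    (hhead : l.head? = some w) (hlast : l.getLast? = some v)
    (hpath : l.tail.Nodup ∧ l.dropLast.Nodup)
    (hlen : l.length = ℓ + 1) (hgt : ℓ > n) :
    ∃ p : List W, p.Chain' (fun x y => ∃ i : Fin n, x ∈ E i ∧ y ∈ F i) ∧
      p.head? = some w ∧ p.getLast? = some v ∧
      p.tail.Nodup ∧ p.dropLast.Nodup ∧ p.length ≤ n + 1 := by
  have hne : l ≠ [] := by
    intro h; rw [h] at hlen; simp at hlen
  obtain ⟨p, h1, h2, h3, h4, h5, h6⟩ :=
    ps_aux n E F l.length l le_rfl hne hchain hpath.1 hpath.2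
  exact ⟨p, h1, h2.trans hhead, h3.trans hlast, h4, h5, h6⟩
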